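/- If {e_{ij}}_{1≤i≤j≤n−1} is the Shi tableau of a dominant region of the m-Shi arrangement of type A_{n−1}, then the conjugate family e'_{ij} = e_{n−j, n−i} is also the Shi tableau of a dominant region, and H_{α_{ij}, m} is a separating wall for the first region if and only if H_{α_{n−j,n−i}, m} is a separating wall for the conjugate region. -/

import Mathlib

open Finset

namespace Shi

/-- Inner product of `x` with the positive root `α_{ij} = e_i - e_{j+1}` (0-indexed
`i ≤ j ≤ n-2`). -/
def inn (x : ℕ → ℝ) (i j : ℕ) : ℝ := x i - x (j + 1)

def SumZero (n : ℕ) (x : ℕ → ℝ) : Prop := ∑ i ∈ Finset.range n, x i = 0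

/-- `x` is a point of the type `A_{n-1}` ambient space lying in the open dominant chamber
and on no hyperplane of the `m`-Shi arrangement, hence an interior point of a dominant
`m`-Shi region. -/
def RegionPoint (n m : ℕ) (x : ℕ → ℝ) : Prop :=
  SumZero n x ∧
  (∀ i j, i ≤ j → j + 2 ≤ n → 0 < inn x i j) ∧
  (∀ i j, i ≤ j → j + 2 ≤ n → ∀ t : ℤ, -(m : ℤ) < t → t ≤ m → inn x i j ≠ (t : ℝ))

/-- `e` is the Shi tableau of the dominant `m`-Shi region containing `x`:
`e_{ij} = min(⌊⟨x, α_{ij}⟩⌋, m)`, which is constant on the region and equals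
`min(k_{ij}, m)` for the Shi coordinates `k` of the `m`-minimal alcove of the region. -/
def TabOf (n m : ℕ) (x : ℕ → ℝ) (e : ℕ → ℕ → ℤ) : Prop :=
  ∀ i j, i ≤ j → j + 2 ≤ n → e i j = min ⌊inn x i j⌋ (m : ℤ)

/-- `e` is the Shi tableau of some dominant region of the `m`-Shi arrangement of type
`A_{n-1}`. -/
def IsShiTab (n m : ℕ) (e : ℕ → ℕ → ℤ) : Prop :=
  ∃ x, RegionPoint n m x ∧ TabOf n m x e

/-- `p` lies in the closure of the `m`-Shi region containing `x`. -/
def InClosure (n m : ℕ) (x p : ℕ → ℝ) : Prop :=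
  SumZero n p ∧ ∀ i j, i ≤ j → j + 2 ≤ n → ∀ t : ℤ, -(m : ℤ) < t → t ≤ m →
    (((t : ℝ) < inn x i j → (t : ℝ) ≤ inn p i j) ∧ (inn x i j < t → inn p i j ≤ t))

/-- The hyperplane `H_{α_{uv}, m}` is a separating wall for the dominant `m`-Shi region
containing `x`: the region lies on the far side of the hyperplane from the fundamental
alcove, and the closure of the region contains a point of the hyperplane lying on no other
hyperplane of the arrangement (so the hyperplane supports a facet). -/
def SepWall (n m : ℕ) (x : ℕ → ℝ) (u v : ℕ) : Prop :=
  (m : ℝ) < inn x u v ∧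
  ∃ p, InClosure n m x p ∧ inn p u v = (m : ℝ) ∧
    ∀ i j, i ≤ j → j + 2 ≤ n → ∀ t : ℤ, -(m : ℤ) < t → t ≤ m →
      ¬(i = u ∧ j = v ∧ t = (m : ℤ)) → inn p i j ≠ (t : ℝ)

/-- The combinatorial criterion for `H_{α_{uv}, m}` to be a separating wall. -/
def SepCrit (m : ℕ) (e : ℕ → ℕ → ℤ) (u v : ℕ) : Prop :=
  e u v = (m : ℤ) ∧ ∀ t, u ≤ t → t < v → e u t + e (t + 1) v = (m : ℤ) - 1

/-- The region with Shi tableau `e` has `H_{α_{uv}, m}` as a separating wall. -/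
def SepWallTab (n m : ℕ) (e : ℕ → ℕ → ℤ) (u v : ℕ) : Prop :=
  ∃ x, RegionPoint n m x ∧ TabOf n m x e ∧ SepWall n m x u v

/-- A tableau function normalized to be `0` outside the staircase index domain. -/
def Normalized (n : ℕ) (e : ℕ → ℕ → ℤ) : Prop :=
  ∀ i j, ¬(i ≤ j ∧ j + 2 ≤ n) → e i j = 0

/-- The conjugate point. -/
def conj (n : ℕ) (x : ℕ → ℝ) : ℕ → ℝ := fun i => -x (n - 1 - i)

lemma inn_conj {n : ℕ} (x : ℕ → ℝ) {i j : ℕ} (hij : i ≤ j) (hjn : j + 2 ≤ n) :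
    inn (conj n x) i j = inn x (n - 2 - j) (n - 2 - i) := by
  unfold inn conj
  have h1 : n - 1 - (j + 1) = n - 2 - j := by omega
  have h2 : n - 2 - i + 1 = n - 1 - i := by omega
  rw [h1, h2]; ring

lemma sumZero_conj {n : ℕ} {x : ℕ → ℝ} (hx : SumZero n x) : SumZero n (conj n x) := by
  unfold SumZero conj at *
  have h := Finset.sum_range_reflect (fun i => x i) n
  calc ∑ i ∈ Finset.range n, -x (n - 1 - i)
      = -∑ i ∈ Finset.range n, x (n - 1 - i) := by rw [Finset.sum_neg_distrib]
    _ = 0 := by rw [h, hx, neg_zero]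

lemma regionPoint_conj {n m : ℕ} {x : ℕ → ℝ} (hx : RegionPoint n m x) :
    RegionPoint n m (conj n x) := by
  obtain ⟨hs, hpos, havd⟩ := hx
  refine ⟨sumZero_conj hs, ?_, ?_⟩
  · intro i j hij hjn
    rw [inn_conj x hij hjn]
    exact hpos _ _ (by omega) (by omega)
  · intro i j hij hjn t ht1 ht2
    rw [inn_conj x hij hjn]
    exact havd _ _ (by omega) (by omega) t ht1 ht2

lemma tabOf_conj {n m : ℕ} {x : ℕ → ℝ} {e : ℕ → ℕ → ℤ} (h : TabOf n m x e) :
    TabOf n m (conj n x) (fun i j => e (n - 2 - j) (n - 2 - i)) := by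
  intro i j hij hjn
  rw [inn_conj x hij hjn]
  exact h _ _ (by omega) (by omega)

lemma inClosure_conj {n m : ℕ} {x p : ℕ → ℝ} (h : InClosure n m x p) :
    InClosure n m (conj n x) (conj n p) := by
  obtain ⟨hs, hc⟩ := h
  refine ⟨sumZero_conj hs, ?_⟩
  intro i j hij hjn t ht1 ht2
  rw [inn_conj x hij hjn, inn_conj p hij hjn]
  exact hc _ _ (by omega) (by omega) t ht1 ht2

lemma sepWall_conj {n m : ℕ} {x : ℕ → ℝ} {u v : ℕ} (huv : u ≤ v) (hvn : v + 2 ≤ n)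
    (h : SepWall n m x u v) : SepWall n m (conj n x) (n - 2 - v) (n - 2 - u) := by
  obtain ⟨h1, p, hp, hpm, hno⟩ := h
  have e1 : n - 2 - (n - 2 - u) = u := by omega
  have e2 : n - 2 - (n - 2 - v) = v := by omega
  refine ⟨?_, conj n p, inClosure_conj hp, ?_, ?_⟩
  · rw [inn_conj x (by omega) (by omega), e1, e2]; exact h1
  · rw [inn_conj p (by omega) (by omega), e1, e2]; exact hpm
  · intro i j hij hjn t ht1 ht2 hne
    rw [inn_conj p hij hjn]
    refine hno _ _ (by omega) (by omega) t ht1 ht2 ?_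
    rintro ⟨hi, hj, htm⟩
    exact hne ⟨by omega, by omega, htm⟩

lemma sepWallTab_conj {n m : ℕ} {e : ℕ → ℕ → ℤ} {u v : ℕ} (huv : u ≤ v) (hvn : v + 2 ≤ n)
    (h : SepWallTab n m e u v) :
    SepWallTab n m (fun i j => e (n - 2 - j) (n - 2 - i)) (n - 2 - v) (n - 2 - u) := by
  obtain ⟨x, hx, ht, hw⟩ := h
  exact ⟨conj n x, regionPoint_conj hx, tabOf_conj ht, sepWall_conj huv hvn hw⟩

/-- the conjugate of a Shi tableau is a Shi tableau, and `H_{α_{ij},m}` is a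
separating wall for the region iff `H_{α_{n-j,n-i},m}` is one for the conjugate region. -/
theorem conjugate_tableau (n m : ℕ) (hn : 2 ≤ n) (hm : 1 ≤ m) (e : ℕ → ℕ → ℤ)
    (he : IsShiTab n m e) :
    IsShiTab n m (fun i j => e (n - 2 - j) (n - 2 - i)) ∧
    ∀ u v, u ≤ v → v + 2 ≤ n →
      (SepWallTab n m e u v ↔
        SepWallTab n m (fun i j => e (n - 2 - j) (n - 2 - i)) (n - 2 - v) (n - 2 - u)) := by
  constructor
  · obtain ⟨x, hx, ht⟩ := he
    exact ⟨conj n x, regionPoint_conj hx, tabOf_conj ht⟩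
  · intro u v huv hvn
    constructor
    · exact sepWallTab_conj huv hvn
    · intro h
      have h2 := sepWallTab_conj (u := n - 2 - v) (v := n - 2 - u)
        (by omega) (by omega) h
      have e1 : n - 2 - (n - 2 - u) = u := by omega
      have e2 : n - 2 - (n - 2 - v) = v := by omega
      rw [e1, e2] at h2
      obtain ⟨x, hx, ht, hw⟩ := h2
      refine ⟨x, hx, ?_, hw⟩
      intro i j hij hjn
      have h3 := ht i j hij hjn
      simp only at h3
      rwa [show n - 2 - (n - 2 - i) = i by omega,
        show n - 2 - (n - 2 - j) = j by omega] at h3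

end Shi
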